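/- For nonnegative integers $a$, $b$, and any real number $\alpha$, the product of falling factorials satisfies $(\alpha)^{\underline{a}} \cdot (\alpha)^{\underline{b}} = \sum_{j=0}^{\min(a,b)} \binom{a}{j}\binom{b}{j} j! \, (\alpha)^{\underline{a+b-j}}$. -/

import Mathlib

/-- The falling factorial `α (α - 1) ⋯ (α - k + 1)`. -/
noncomputable def fallingFac (α : ℝ) (k : ℕ) : ℝ := ∏ i ∈ Finset.range k, (α - i)

lemma fallingFac_succ (α : ℝ) (k : ℕ) :
    fallingFac α (k + 1) = fallingFac α k * (α - k) := Finset.prod_range_succ _ _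

lemma fallingFac_coeff (a b j : ℕ) :
    (a.choose (j+1) : ℝ) * (b.choose (j+1) : ℝ) * ((j+1).factorial : ℝ)
      + (a.choose j : ℝ) * (b.choose j : ℝ) * (j.factorial : ℝ) * ((a - j : ℕ) : ℝ)
    = (a.choose (j+1) : ℝ) * ((b+1).choose (j+1) : ℝ) * ((j+1).factorial : ℝ) := by
  have h : ((a.choose (j+1)) : ℝ) * ((j : ℝ) + 1) = (a.choose j : ℝ) * ((a - j : ℕ) : ℝ) := by
    exact_mod_cast Nat.choose_succ_right_eq a j
  have hb : (((b+1).choose (j+1)) : ℝ) = (b.choose j : ℝ) + (b.choose (j+1) : ℝ) := by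
    exact_mod_cast Nat.choose_succ_succ b j
  have hf : (((j+1).factorial) : ℝ) = ((j : ℝ) + 1) * (j.factorial : ℝ) := by
    rw [Nat.factorial_succ]; push_cast; ring
  rw [hb, hf]
  linear_combination (-(b.choose j : ℝ) * (j.factorial : ℝ)) * h

lemma fallingFac_key (a b : ℕ) (α : ℝ) :
    fallingFac α a * fallingFac α b =
      ∑ j ∈ Finset.range (b + 1),
        (a.choose j : ℝ) * (b.choose j : ℝ) * (j.factorial : ℝ) *
          fallingFac α (a + b - j) := by
  induction b with
  | zero => simp [fallingFac]
  | succ b ih =>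
    have hstep : fallingFac α a * fallingFac α (b+1)
        = (fallingFac α a * fallingFac α b) * (α - b) := by
      rw [fallingFac_succ]; ring
    rw [hstep, ih, Finset.sum_mul]
    have hterm : ∀ j ∈ Finset.range (b+1),
        (a.choose j : ℝ) * (b.choose j : ℝ) * (j.factorial : ℝ) *
          fallingFac α (a + b - j) * (α - b)
        = (a.choose j : ℝ) * (b.choose j : ℝ) * (j.factorial : ℝ) *
            fallingFac α (a + b + 1 - j)
          + (a.choose j : ℝ) * (b.choose j : ℝ) * (j.factorial : ℝ) *
            ((a - j : ℕ) : ℝ) * fallingFac α (a + b - j) := by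
      intro j hj
      rcases le_or_gt j a with hja | hja
      · have h1 : a + b + 1 - j = (a + b - j) + 1 := by omega
        rw [h1, fallingFac_succ]
        have h2 : ((a + b - j : ℕ) : ℝ) = (a : ℝ) + b - j := by
          rw [Nat.cast_sub (by omega : j ≤ a + b)]; push_cast; ring
        have h3 : ((a - j : ℕ) : ℝ) = (a : ℝ) - j := by
          rw [Nat.cast_sub hja]
        rw [h2, h3]; ring
      · simp [Nat.choose_eq_zero_of_lt hja]
    rw [Finset.sum_congr rfl hterm, Finset.sum_add_distrib]
    simp only [show a + (b+1) = a + b + 1 from rfl]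
    -- extend the first sum to range (b+2): the new term vanishes
    have hS1 : (∑ j ∈ Finset.range (b+1),
        (a.choose j : ℝ) * (b.choose j : ℝ) * (j.factorial : ℝ) *
          fallingFac α (a + b + 1 - j))
        = ∑ j ∈ Finset.range (b+2),
        (a.choose j : ℝ) * (b.choose j : ℝ) * (j.factorial : ℝ) *
          fallingFac α (a + b + 1 - j) := by
      rw [Finset.sum_range_succ _ (b+1)]
      simp [Nat.choose_succ_self]
    rw [hS1]
    rw [Finset.sum_range_succ' (fun j => (a.choose j : ℝ) * (b.choose j : ℝ) *
          (j.factorial : ℝ) * fallingFac α (a + b + 1 - j)) (b+1)]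
    rw [Finset.sum_range_succ' (fun j => (a.choose j : ℝ) * ((b+1).choose j : ℝ) *
          (j.factorial : ℝ) * fallingFac α (a + b + 1 - j)) (b+1)]
    simp only [Nat.choose_zero_right, Nat.cast_one, Nat.factorial_zero, Nat.sub_zero]
    rw [add_right_comm, ← Finset.sum_add_distrib]
    congr 1
    apply Finset.sum_congr rfl
    intro j hj
    have h1 : a + b + 1 - (j + 1) = a + b - j := by omega
    rw [h1]
    linear_combination (fallingFac α (a + b - j)) * fallingFac_coeff a b j

/-- Product of two falling factorials expanded in the falling factorial basis. -/
theorem fallingFac_mul_fallingFac (a b : ℕ) (α : ℝ) :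
    fallingFac α a * fallingFac α b =
      ∑ j ∈ Finset.range (min a b + 1),
        (a.choose j : ℝ) * (b.choose j : ℝ) * (j.factorial : ℝ) *
          fallingFac α (a + b - j) := by
  rcases le_total b a with hba | hab
  · rw [min_eq_right hba]
    exact fallingFac_key a b α
  · rw [min_eq_left hab, fallingFac_key a b α]
    symm
    apply Finset.sum_subset (Finset.range_subset_range.2 (by omega))
    intro j hj hj'
    have : a < j := by
      simp only [Finset.mem_range] at hj'
      omega
    simp [Nat.choose_eq_zero_of_lt this]
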